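/- (Variational CVaR is attained at a quantile.) Let p be a probability measure on a measurable space Ω, f : Ω → ℝ integrable, β ∈ (0,1), and let q ∈ ℝ be a β-quantile of f, i.e., p({f < q}) ≤ β and p({f ≤ q}) ≥ β. Then inf_{α ∈ ℝ} [ α + (1/(1−β)) ∫ (f − α)₊ dp ] = q + (1/(1−β)) ∫ (f − q)₊ dp. -/

import Mathlib

open MeasureTheory
open scoped ENNReal

/-- The variational CVaR expression is attained at any `β`-quantile `q` of `f`, i.e. any
`q` with `p {f < q} ≤ β` and `p {f ≤ q} ≥ β`:
`inf_{α ∈ ℝ} [ α + (1/(1−β)) ∫ (f − α)₊ dp ] = q + (1/(1−β)) ∫ (f − q)₊ dp`. -/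
theorem cvar_attained_at_quantile {Ω : Type*} [MeasurableSpace Ω] (p : Measure Ω)
    [IsProbabilityMeasure p] (f : Ω → ℝ) (hf : Integrable f p)
    (β : ℝ) (hβ0 : 0 < β) (hβ1 : β < 1) (q : ℝ)
    (hq1 : p {x | f x < q} ≤ ENNReal.ofReal β)
    (hq2 : ENNReal.ofReal β ≤ p {x | f x ≤ q}) :
    ⨅ α : ℝ, (α + (1 / (1 - β)) * ∫ x, max (f x - α) 0 ∂p)
      = q + (1 / (1 - β)) * ∫ x, max (f x - q) 0 ∂p := by
  obtain ⟨g, hgm, hg⟩ := hf.aemeasurable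
  have hβ1' : (0:ℝ) < 1 - β := by linarith
  set c : ℝ := 1 / (1 - β) with hc
  have hc0 : 0 < c := by positivity
  have hc1 : c * (1 - β) = 1 := by rw [hc, one_div, inv_mul_cancel₀ hβ1'.ne']
  have hgi : Integrable g p := hf.congr hg
  have hint : ∀ α : ℝ, Integrable (fun x => max (g x - α) 0) p :=
    fun α => (hgi.sub (integrable_const α)).pos_part
  have hIeq : ∀ α : ℝ, ∫ x, max (f x - α) 0 ∂p = ∫ x, max (g x - α) 0 ∂p :=
    fun α => integral_congr_ae (hg.mono fun x hx => by simp only [hx])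
  have hslt : MeasurableSet {x | g x < q} := measurableSet_lt hgm measurable_const
  have hsle : MeasurableSet {x | g x ≤ q} := measurableSet_le hgm measurable_const
  have hsgt : MeasurableSet {x | q < g x} := measurableSet_lt measurable_const hgm
  have hsge : MeasurableSet {x | q ≤ g x} := measurableSet_le measurable_const hgm
  have hmlt : p {x | g x < q} = p {x | f x < q} :=
    measure_congr (hg.mono fun x hx => by show (g x < q) = (f x < q); rw [hx])
  have hmle : p {x | g x ≤ q} = p {x | f x ≤ q} :=
    measure_congr (hg.mono fun x hx => by show (g x ≤ q) = (f x ≤ q); rw [hx])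
  -- upper bound on the measure of {q < g}
  have hm1 : (p {x | q < g x}).toReal ≤ 1 - β := by
    have h1 : {x | q < g x} = {x | g x ≤ q}ᶜ := by ext x; simp [not_le]
    have h2 : p {x | q < g x} ≤ ENNReal.ofReal (1 - β) := by
      rw [h1, measure_compl hsle (measure_ne_top _ _), measure_univ]
      rw [tsub_le_iff_right]
      calc (1 : ℝ≥0∞) = ENNReal.ofReal (1 - β) + ENNReal.ofReal β := by
            rw [← ENNReal.ofReal_add (by linarith) hβ0.le]
            norm_num
        _ ≤ ENNReal.ofReal (1 - β) + p {x | g x ≤ q} := by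
            rw [hmle]; exact add_le_add_right hq2 _
    calc (p {x | q < g x}).toReal ≤ (ENNReal.ofReal (1 - β)).toReal :=
          ENNReal.toReal_mono ENNReal.ofReal_ne_top h2
      _ = 1 - β := ENNReal.toReal_ofReal (by linarith)
  -- lower bound on the measure of {q ≤ g}
  have hm2 : 1 - β ≤ (p {x | q ≤ g x}).toReal := by
    have h1 : {x | q ≤ g x} = {x | g x < q}ᶜ := by ext x; simp [not_lt]
    have h2 : ENNReal.ofReal (1 - β) ≤ p {x | q ≤ g x} := by
      rw [h1, measure_compl hslt (measure_ne_top _ _), measure_univ]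
      refine (ENNReal.cancel_of_ne (measure_ne_top p _)).le_tsub_of_add_le_right ?_
      calc ENNReal.ofReal (1 - β) + p {x | g x < q}
          ≤ ENNReal.ofReal (1 - β) + ENNReal.ofReal β := by
            rw [hmlt]; exact add_le_add_right hq1 _
        _ = 1 := by
            rw [← ENNReal.ofReal_add (by linarith) hβ0.le]; norm_num
    calc (1 : ℝ) - β = (ENNReal.ofReal (1 - β)).toReal :=
          (ENNReal.toReal_ofReal (by linarith)).symm
      _ ≤ (p {x | q ≤ g x}).toReal :=
          ENNReal.toReal_mono (measure_ne_top _ _) h2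
  -- the key pointwise/integral estimates
  have key : ∀ α : ℝ, q + c * ∫ x, max (f x - q) 0 ∂p ≤ α + c * ∫ x, max (f x - α) 0 ∂p := by
    intro α
    rw [hIeq, hIeq]
    rcases le_or_gt q α with hqa | hqa
    · -- α ≥ q
      have hpt : ∀ x, max (g x - q) 0 ≤
          max (g x - α) 0 + Set.indicator {x | q < g x} (fun _ => α - q) x := by
        intro x
        by_cases hx : q < g x
        · simp only [Set.indicator_apply, Set.mem_setOf_eq, if_pos hx]
          refine max_le ?_ ?_ <;>
            nlinarith [le_max_left (g x - α) (0:ℝ), le_max_right (g x - α) (0:ℝ)]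
        · simp only [Set.indicator_apply, Set.mem_setOf_eq, if_neg hx]
          push_neg at hx
          refine max_le ?_ ?_ <;>
            nlinarith [le_max_left (g x - α) (0:ℝ), le_max_right (g x - α) (0:ℝ)]
      have hInt : ∫ x, max (g x - q) 0 ∂p ≤
          ∫ x, max (g x - α) 0 ∂p + (p {x | q < g x}).toReal * (α - q) := by
        have h1 : ∫ x, max (g x - q) 0 ∂p ≤
            ∫ x, (max (g x - α) 0 + Set.indicator {x | q < g x} (fun _ => α - q) x) ∂p :=
          integral_mono (hint q) ((hint α).add ((integrable_const _).indicator hsgt)) hpt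
        rwa [integral_add (hint α) ((integrable_const _).indicator hsgt),
          integral_indicator_const _ hsgt, smul_eq_mul] at h1
      have hcm : c * (p {x | q < g x}).toReal ≤ 1 := by
        calc c * (p {x | q < g x}).toReal ≤ c * (1 - β) :=
              mul_le_mul_of_nonneg_left hm1 hc0.le
          _ = 1 := hc1
      nlinarith [ENNReal.toReal_nonneg (a := p {x | q < g x})]
    · -- α < q
      have hpt : ∀ x, max (g x - q) 0 + Set.indicator {x | q ≤ g x} (fun _ => q - α) x ≤
          max (g x - α) 0 := by
        intro x
        by_cases hx : q ≤ g x
        · simp only [Set.indicator_apply, Set.mem_setOf_eq, if_pos hx]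
          have : g x - α ≤ max (g x - α) 0 := le_max_left _ _
          have h0 : max (g x - q) 0 = g x - q := max_eq_left (by linarith)
          linarith
        · simp only [Set.indicator_apply, Set.mem_setOf_eq, if_neg hx]
          push_neg at hx
          have h0 : max (g x - q) 0 = 0 := max_eq_right (by linarith)
          have : (0:ℝ) ≤ max (g x - α) 0 := le_max_right _ _
          linarith
      have hInt : ∫ x, max (g x - q) 0 ∂p + (p {x | q ≤ g x}).toReal * (q - α) ≤
          ∫ x, max (g x - α) 0 ∂p := by
        have h1 : ∫ x, (max (g x - q) 0 + Set.indicator {x | q ≤ g x} (fun _ => q - α) x) ∂p ≤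
            ∫ x, max (g x - α) 0 ∂p :=
          integral_mono ((hint q).add ((integrable_const _).indicator hsge)) (hint α) hpt
        rwa [integral_add (hint q) ((integrable_const _).indicator hsge),
          integral_indicator_const _ hsge, smul_eq_mul] at h1
      have hcm : 1 ≤ c * (p {x | q ≤ g x}).toReal := by
        calc (1:ℝ) = c * (1 - β) := hc1.symm
          _ ≤ c * (p {x | q ≤ g x}).toReal := mul_le_mul_of_nonneg_left hm2 hc0.le
      nlinarith [ENNReal.toReal_nonneg (a := p {x | q ≤ g x})]
  refine le_antisymm ?_ (le_ciInf key)
  exact ciInf_le ⟨q + c * ∫ x, max (f x - q) 0 ∂p, by rintro y ⟨α, rfl⟩; exact key α⟩ q
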